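/- The C-algebras Λ := C⟨x,y⟩/(xy+yx, x³-y²) and Γ := C⟨a,b⟩/(ab+ba, -a²+b³+aba) are not isomorphic as C-algebras. -/

import Mathlib

open FreeAlgebra

/-- The relations defining Λ = C⟨x,y⟩/(xy+yx, x³-y²), with x = ι ℂ 0 and y = ι ℂ 1. -/
inductive LamRel : FreeAlgebra ℂ (Fin 2) → FreeAlgebra ℂ (Fin 2) → Prop
  | r1 : LamRel (ι ℂ 0 * ι ℂ 1 + ι ℂ 1 * ι ℂ 0) 0
  | r2 : LamRel ((ι ℂ 0) ^ 3 - (ι ℂ 1) ^ 2) 0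

/-- The relations defining Γ = C⟨a,b⟩/(ab+ba, -a²+b³+aba), with a = ι ℂ 0 and b = ι ℂ 1. -/
inductive GamRel : FreeAlgebra ℂ (Fin 2) → FreeAlgebra ℂ (Fin 2) → Prop
  | r1 : GamRel (ι ℂ 0 * ι ℂ 1 + ι ℂ 1 * ι ℂ 0) 0
  | r2 : GamRel (-(ι ℂ 0) ^ 2 + (ι ℂ 1) ^ 3 + ι ℂ 0 * ι ℂ 1 * ι ℂ 0) 0

namespace Stmt6Aux
noncomputable section

/-! We realize the 8-dimensional algebra `Λ/𝔪⁵` (with basis `1, x, x², x³, x⁴, y, xy, x²y`,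
subject to `yx = -xy`, `y² = x³`, `x⁵ = 0`, `x³y = 0`) concretely as `Fin 8 → ℂ`
with multiplication given by explicit structure constants `pc`. -/

def MA : Type := Fin 8 → ℂ

def pc (u v : MA) : MA := fun k =>
  if k = 0 then u 0 * v 0
  else if k = 1 then u 0 * v 1 + u 1 * v 0
  else if k = 2 then u 0 * v 2 + u 1 * v 1 + u 2 * v 0
  else if k = 3 then u 0 * v 3 + u 1 * v 2 + u 2 * v 1 + u 3 * v 0 + u 5 * v 5
  else if k = 4 then u 0 * v 4 + u 1 * v 3 + u 2 * v 2 + u 3 * v 1 + u 4 * v 0 - u 5 * v 6 + u 6 * v 5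
  else if k = 5 then u 0 * v 5 + u 5 * v 0
  else if k = 6 then u 0 * v 6 + u 1 * v 5 - u 5 * v 1 + u 6 * v 0
  else u 0 * v 7 + u 1 * v 6 + u 2 * v 5 + u 5 * v 2 - u 6 * v 1 + u 7 * v 0

lemma pc0 (u v : MA) : pc u v 0 = u 0 * v 0 := rfl
lemma pc1 (u v : MA) : pc u v 1 = u 0 * v 1 + u 1 * v 0 := rfl
lemma pc2 (u v : MA) : pc u v 2 = u 0 * v 2 + u 1 * v 1 + u 2 * v 0 := rfl
lemma pc3 (u v : MA) : pc u v 3 = u 0 * v 3 + u 1 * v 2 + u 2 * v 1 + u 3 * v 0 + u 5 * v 5 := rfl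
lemma pc4 (u v : MA) : pc u v 4 = u 0 * v 4 + u 1 * v 3 + u 2 * v 2 + u 3 * v 1 + u 4 * v 0 - u 5 * v 6 + u 6 * v 5 := rfl
lemma pc5 (u v : MA) : pc u v 5 = u 0 * v 5 + u 5 * v 0 := rfl
lemma pc6 (u v : MA) : pc u v 6 = u 0 * v 6 + u 1 * v 5 - u 5 * v 1 + u 6 * v 0 := rfl
lemma pc7 (u v : MA) : pc u v 7 = u 0 * v 7 + u 1 * v 6 + u 2 * v 5 + u 5 * v 2 - u 6 * v 1 + u 7 * v 0 := rfl

instance : AddCommGroup MA := inferInstanceAs (AddCommGroup (Fin 8 → ℂ))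
instance : Module ℂ MA := inferInstanceAs (Module ℂ (Fin 8 → ℂ))

lemma addco (u v : MA) (k : Fin 8) : (u + v) k = u k + v k := rfl
lemma negco (u : MA) (k : Fin 8) : (-u) k = -(u k) := rfl
lemma smulco (r : ℂ) (u : MA) (k : Fin 8) : (r • u) k = r * u k := rfl
lemma zeroco (k : Fin 8) : (0 : MA) k = 0 := rfl

def oneMA : MA := fun k => if k = 0 then 1 else 0

lemma one0 : oneMA 0 = 1 := rfl
lemma one1 : oneMA 1 = 0 := rfl
lemma one2 : oneMA 2 = 0 := rfl
lemma one3 : oneMA 3 = 0 := rfl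
lemma one4 : oneMA 4 = 0 := rfl
lemma one5 : oneMA 5 = 0 := rfl
lemma one6 : oneMA 6 = 0 := rfl
lemma one7 : oneMA 7 = 0 := rfl

lemma mulAssoc0 (u v w : MA) : pc (pc u v) w 0 = pc u (pc v w) 0 := by
  simp only [pc0, pc1, pc2, pc3, pc4, pc5, pc6, pc7]
  ring
lemma mulAssoc1 (u v w : MA) : pc (pc u v) w 1 = pc u (pc v w) 1 := by
  simp only [pc0, pc1, pc2, pc3, pc4, pc5, pc6, pc7]
  ring
lemma mulAssoc2 (u v w : MA) : pc (pc u v) w 2 = pc u (pc v w) 2 := by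
  simp only [pc0, pc1, pc2, pc3, pc4, pc5, pc6, pc7]
  ring
lemma mulAssoc3 (u v w : MA) : pc (pc u v) w 3 = pc u (pc v w) 3 := by
  simp only [pc0, pc1, pc2, pc3, pc4, pc5, pc6, pc7]
  ring
lemma mulAssoc4 (u v w : MA) : pc (pc u v) w 4 = pc u (pc v w) 4 := by
  simp only [pc0, pc1, pc2, pc3, pc4, pc5, pc6, pc7]
  ring
lemma mulAssoc5 (u v w : MA) : pc (pc u v) w 5 = pc u (pc v w) 5 := by
  simp only [pc0, pc1, pc2, pc3, pc4, pc5, pc6, pc7]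
  ring
lemma mulAssoc6 (u v w : MA) : pc (pc u v) w 6 = pc u (pc v w) 6 := by
  simp only [pc0, pc1, pc2, pc3, pc4, pc5, pc6, pc7]
  ring
lemma mulAssoc7 (u v w : MA) : pc (pc u v) w 7 = pc u (pc v w) 7 := by
  simp only [pc0, pc1, pc2, pc3, pc4, pc5, pc6, pc7]
  ring

lemma pc_assoc (u v w : MA) : pc (pc u v) w = pc u (pc v w) := by
  funext k; fin_cases k
  exacts [mulAssoc0 u v w, mulAssoc1 u v w, mulAssoc2 u v w, mulAssoc3 u v w,
    mulAssoc4 u v w, mulAssoc5 u v w, mulAssoc6 u v w, mulAssoc7 u v w]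

lemma oneL0 (u : MA) : pc oneMA u 0 = u 0 := by
  simp only [pc0, pc1, pc2, pc3, pc4, pc5, pc6, pc7, one0, one1, one2, one3, one4, one5, one6, one7]
  ring
lemma oneL1 (u : MA) : pc oneMA u 1 = u 1 := by
  simp only [pc0, pc1, pc2, pc3, pc4, pc5, pc6, pc7, one0, one1, one2, one3, one4, one5, one6, one7]
  ring
lemma oneL2 (u : MA) : pc oneMA u 2 = u 2 := by
  simp only [pc0, pc1, pc2, pc3, pc4, pc5, pc6, pc7, one0, one1, one2, one3, one4, one5, one6, one7]
  ring
lemma oneL3 (u : MA) : pc oneMA u 3 = u 3 := by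
  simp only [pc0, pc1, pc2, pc3, pc4, pc5, pc6, pc7, one0, one1, one2, one3, one4, one5, one6, one7]
  ring
lemma oneL4 (u : MA) : pc oneMA u 4 = u 4 := by
  simp only [pc0, pc1, pc2, pc3, pc4, pc5, pc6, pc7, one0, one1, one2, one3, one4, one5, one6, one7]
  ring
lemma oneL5 (u : MA) : pc oneMA u 5 = u 5 := by
  simp only [pc0, pc1, pc2, pc3, pc4, pc5, pc6, pc7, one0, one1, one2, one3, one4, one5, one6, one7]
  ring
lemma oneL6 (u : MA) : pc oneMA u 6 = u 6 := by
  simp only [pc0, pc1, pc2, pc3, pc4, pc5, pc6, pc7, one0, one1, one2, one3, one4, one5, one6, one7]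
  ring
lemma oneL7 (u : MA) : pc oneMA u 7 = u 7 := by
  simp only [pc0, pc1, pc2, pc3, pc4, pc5, pc6, pc7, one0, one1, one2, one3, one4, one5, one6, one7]
  ring

lemma pc_oneL (u : MA) : pc oneMA u = u := by
  funext k; fin_cases k
  exacts [oneL0 u, oneL1 u, oneL2 u, oneL3 u, oneL4 u, oneL5 u, oneL6 u, oneL7 u]

lemma oneR0 (u : MA) : pc u oneMA 0 = u 0 := by
  simp only [pc0, pc1, pc2, pc3, pc4, pc5, pc6, pc7, one0, one1, one2, one3, one4, one5, one6, one7]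
  ring
lemma oneR1 (u : MA) : pc u oneMA 1 = u 1 := by
  simp only [pc0, pc1, pc2, pc3, pc4, pc5, pc6, pc7, one0, one1, one2, one3, one4, one5, one6, one7]
  ring
lemma oneR2 (u : MA) : pc u oneMA 2 = u 2 := by
  simp only [pc0, pc1, pc2, pc3, pc4, pc5, pc6, pc7, one0, one1, one2, one3, one4, one5, one6, one7]
  ring
lemma oneR3 (u : MA) : pc u oneMA 3 = u 3 := by
  simp only [pc0, pc1, pc2, pc3, pc4, pc5, pc6, pc7, one0, one1, one2, one3, one4, one5, one6, one7]
  ring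
lemma oneR4 (u : MA) : pc u oneMA 4 = u 4 := by
  simp only [pc0, pc1, pc2, pc3, pc4, pc5, pc6, pc7, one0, one1, one2, one3, one4, one5, one6, one7]
  ring
lemma oneR5 (u : MA) : pc u oneMA 5 = u 5 := by
  simp only [pc0, pc1, pc2, pc3, pc4, pc5, pc6, pc7, one0, one1, one2, one3, one4, one5, one6, one7]
  ring
lemma oneR6 (u : MA) : pc u oneMA 6 = u 6 := by
  simp only [pc0, pc1, pc2, pc3, pc4, pc5, pc6, pc7, one0, one1, one2, one3, one4, one5, one6, one7]
  ring
lemma oneR7 (u : MA) : pc u oneMA 7 = u 7 := by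
  simp only [pc0, pc1, pc2, pc3, pc4, pc5, pc6, pc7, one0, one1, one2, one3, one4, one5, one6, one7]
  ring

lemma pc_oneR (u : MA) : pc u oneMA = u := by
  funext k; fin_cases k
  exacts [oneR0 u, oneR1 u, oneR2 u, oneR3 u, oneR4 u, oneR5 u, oneR6 u, oneR7 u]

lemma dL0 (u v w : MA) : pc u (v + w) 0 = (pc u v + pc u w) 0 := by
  simp only [pc0, pc1, pc2, pc3, pc4, pc5, pc6, pc7, addco]
  ring
lemma dL1 (u v w : MA) : pc u (v + w) 1 = (pc u v + pc u w) 1 := by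
  simp only [pc0, pc1, pc2, pc3, pc4, pc5, pc6, pc7, addco]
  ring
lemma dL2 (u v w : MA) : pc u (v + w) 2 = (pc u v + pc u w) 2 := by
  simp only [pc0, pc1, pc2, pc3, pc4, pc5, pc6, pc7, addco]
  ring
lemma dL3 (u v w : MA) : pc u (v + w) 3 = (pc u v + pc u w) 3 := by
  simp only [pc0, pc1, pc2, pc3, pc4, pc5, pc6, pc7, addco]
  ring
lemma dL4 (u v w : MA) : pc u (v + w) 4 = (pc u v + pc u w) 4 := by
  simp only [pc0, pc1, pc2, pc3, pc4, pc5, pc6, pc7, addco]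
  ring
lemma dL5 (u v w : MA) : pc u (v + w) 5 = (pc u v + pc u w) 5 := by
  simp only [pc0, pc1, pc2, pc3, pc4, pc5, pc6, pc7, addco]
  ring
lemma dL6 (u v w : MA) : pc u (v + w) 6 = (pc u v + pc u w) 6 := by
  simp only [pc0, pc1, pc2, pc3, pc4, pc5, pc6, pc7, addco]
  ring
lemma dL7 (u v w : MA) : pc u (v + w) 7 = (pc u v + pc u w) 7 := by
  simp only [pc0, pc1, pc2, pc3, pc4, pc5, pc6, pc7, addco]
  ring

lemma pc_dL (u v w : MA) : pc u (v + w) = pc u v + pc u w := by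
  funext k; fin_cases k
  exacts [dL0 u v w, dL1 u v w, dL2 u v w, dL3 u v w, dL4 u v w, dL5 u v w, dL6 u v w, dL7 u v w]

lemma dR0 (u v w : MA) : pc (u + v) w 0 = (pc u w + pc v w) 0 := by
  simp only [pc0, pc1, pc2, pc3, pc4, pc5, pc6, pc7, addco]
  ring
lemma dR1 (u v w : MA) : pc (u + v) w 1 = (pc u w + pc v w) 1 := by
  simp only [pc0, pc1, pc2, pc3, pc4, pc5, pc6, pc7, addco]
  ring
lemma dR2 (u v w : MA) : pc (u + v) w 2 = (pc u w + pc v w) 2 := by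
  simp only [pc0, pc1, pc2, pc3, pc4, pc5, pc6, pc7, addco]
  ring
lemma dR3 (u v w : MA) : pc (u + v) w 3 = (pc u w + pc v w) 3 := by
  simp only [pc0, pc1, pc2, pc3, pc4, pc5, pc6, pc7, addco]
  ring
lemma dR4 (u v w : MA) : pc (u + v) w 4 = (pc u w + pc v w) 4 := by
  simp only [pc0, pc1, pc2, pc3, pc4, pc5, pc6, pc7, addco]
  ring
lemma dR5 (u v w : MA) : pc (u + v) w 5 = (pc u w + pc v w) 5 := by
  simp only [pc0, pc1, pc2, pc3, pc4, pc5, pc6, pc7, addco]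
  ring
lemma dR6 (u v w : MA) : pc (u + v) w 6 = (pc u w + pc v w) 6 := by
  simp only [pc0, pc1, pc2, pc3, pc4, pc5, pc6, pc7, addco]
  ring
lemma dR7 (u v w : MA) : pc (u + v) w 7 = (pc u w + pc v w) 7 := by
  simp only [pc0, pc1, pc2, pc3, pc4, pc5, pc6, pc7, addco]
  ring

lemma pc_dR (u v w : MA) : pc (u + v) w = pc u w + pc v w := by
  funext k; fin_cases k
  exacts [dR0 u v w, dR1 u v w, dR2 u v w, dR3 u v w, dR4 u v w, dR5 u v w, dR6 u v w, dR7 u v w]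

lemma zL0 (u : MA) : pc 0 u 0 = (0 : MA) 0 := by
  simp only [pc0, pc1, pc2, pc3, pc4, pc5, pc6, pc7, zeroco]
  ring
lemma zL1 (u : MA) : pc 0 u 1 = (0 : MA) 1 := by
  simp only [pc0, pc1, pc2, pc3, pc4, pc5, pc6, pc7, zeroco]
  ring
lemma zL2 (u : MA) : pc 0 u 2 = (0 : MA) 2 := by
  simp only [pc0, pc1, pc2, pc3, pc4, pc5, pc6, pc7, zeroco]
  ring
lemma zL3 (u : MA) : pc 0 u 3 = (0 : MA) 3 := by
  simp only [pc0, pc1, pc2, pc3, pc4, pc5, pc6, pc7, zeroco]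
  ring
lemma zL4 (u : MA) : pc 0 u 4 = (0 : MA) 4 := by
  simp only [pc0, pc1, pc2, pc3, pc4, pc5, pc6, pc7, zeroco]
  ring
lemma zL5 (u : MA) : pc 0 u 5 = (0 : MA) 5 := by
  simp only [pc0, pc1, pc2, pc3, pc4, pc5, pc6, pc7, zeroco]
  ring
lemma zL6 (u : MA) : pc 0 u 6 = (0 : MA) 6 := by
  simp only [pc0, pc1, pc2, pc3, pc4, pc5, pc6, pc7, zeroco]
  ring
lemma zL7 (u : MA) : pc 0 u 7 = (0 : MA) 7 := by
  simp only [pc0, pc1, pc2, pc3, pc4, pc5, pc6, pc7, zeroco]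
  ring

lemma pc_zL (u : MA) : pc 0 u = 0 := by
  funext k; fin_cases k
  exacts [zL0 u, zL1 u, zL2 u, zL3 u, zL4 u, zL5 u, zL6 u, zL7 u]

lemma zR0 (u : MA) : pc u 0 0 = (0 : MA) 0 := by
  simp only [pc0, pc1, pc2, pc3, pc4, pc5, pc6, pc7, zeroco]
  ring
lemma zR1 (u : MA) : pc u 0 1 = (0 : MA) 1 := by
  simp only [pc0, pc1, pc2, pc3, pc4, pc5, pc6, pc7, zeroco]
  ring
lemma zR2 (u : MA) : pc u 0 2 = (0 : MA) 2 := by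
  simp only [pc0, pc1, pc2, pc3, pc4, pc5, pc6, pc7, zeroco]
  ring
lemma zR3 (u : MA) : pc u 0 3 = (0 : MA) 3 := by
  simp only [pc0, pc1, pc2, pc3, pc4, pc5, pc6, pc7, zeroco]
  ring
lemma zR4 (u : MA) : pc u 0 4 = (0 : MA) 4 := by
  simp only [pc0, pc1, pc2, pc3, pc4, pc5, pc6, pc7, zeroco]
  ring
lemma zR5 (u : MA) : pc u 0 5 = (0 : MA) 5 := by
  simp only [pc0, pc1, pc2, pc3, pc4, pc5, pc6, pc7, zeroco]
  ring
lemma zR6 (u : MA) : pc u 0 6 = (0 : MA) 6 := by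
  simp only [pc0, pc1, pc2, pc3, pc4, pc5, pc6, pc7, zeroco]
  ring
lemma zR7 (u : MA) : pc u 0 7 = (0 : MA) 7 := by
  simp only [pc0, pc1, pc2, pc3, pc4, pc5, pc6, pc7, zeroco]
  ring

lemma pc_zR (u : MA) : pc u 0 = 0 := by
  funext k; fin_cases k
  exacts [zR0 u, zR1 u, zR2 u, zR3 u, zR4 u, zR5 u, zR6 u, zR7 u]

lemma sL0 (r : ℂ) (u v : MA) : pc (r • u) v 0 = (r • pc u v) 0 := by
  simp only [pc0, pc1, pc2, pc3, pc4, pc5, pc6, pc7, smulco]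
  ring
lemma sL1 (r : ℂ) (u v : MA) : pc (r • u) v 1 = (r • pc u v) 1 := by
  simp only [pc0, pc1, pc2, pc3, pc4, pc5, pc6, pc7, smulco]
  ring
lemma sL2 (r : ℂ) (u v : MA) : pc (r • u) v 2 = (r • pc u v) 2 := by
  simp only [pc0, pc1, pc2, pc3, pc4, pc5, pc6, pc7, smulco]
  ring
lemma sL3 (r : ℂ) (u v : MA) : pc (r • u) v 3 = (r • pc u v) 3 := by
  simp only [pc0, pc1, pc2, pc3, pc4, pc5, pc6, pc7, smulco]
  ring
lemma sL4 (r : ℂ) (u v : MA) : pc (r • u) v 4 = (r • pc u v) 4 := by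
  simp only [pc0, pc1, pc2, pc3, pc4, pc5, pc6, pc7, smulco]
  ring
lemma sL5 (r : ℂ) (u v : MA) : pc (r • u) v 5 = (r • pc u v) 5 := by
  simp only [pc0, pc1, pc2, pc3, pc4, pc5, pc6, pc7, smulco]
  ring
lemma sL6 (r : ℂ) (u v : MA) : pc (r • u) v 6 = (r • pc u v) 6 := by
  simp only [pc0, pc1, pc2, pc3, pc4, pc5, pc6, pc7, smulco]
  ring
lemma sL7 (r : ℂ) (u v : MA) : pc (r • u) v 7 = (r • pc u v) 7 := by
  simp only [pc0, pc1, pc2, pc3, pc4, pc5, pc6, pc7, smulco]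
  ring

lemma pc_sL (r : ℂ) (u v : MA) : pc (r • u) v = r • pc u v := by
  funext k; fin_cases k
  exacts [sL0 r u v, sL1 r u v, sL2 r u v, sL3 r u v, sL4 r u v, sL5 r u v, sL6 r u v, sL7 r u v]

lemma sR0 (r : ℂ) (u v : MA) : pc u (r • v) 0 = (r • pc u v) 0 := by
  simp only [pc0, pc1, pc2, pc3, pc4, pc5, pc6, pc7, smulco]
  ring
lemma sR1 (r : ℂ) (u v : MA) : pc u (r • v) 1 = (r • pc u v) 1 := by
  simp only [pc0, pc1, pc2, pc3, pc4, pc5, pc6, pc7, smulco]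
  ring
lemma sR2 (r : ℂ) (u v : MA) : pc u (r • v) 2 = (r • pc u v) 2 := by
  simp only [pc0, pc1, pc2, pc3, pc4, pc5, pc6, pc7, smulco]
  ring
lemma sR3 (r : ℂ) (u v : MA) : pc u (r • v) 3 = (r • pc u v) 3 := by
  simp only [pc0, pc1, pc2, pc3, pc4, pc5, pc6, pc7, smulco]
  ring
lemma sR4 (r : ℂ) (u v : MA) : pc u (r • v) 4 = (r • pc u v) 4 := by
  simp only [pc0, pc1, pc2, pc3, pc4, pc5, pc6, pc7, smulco]
  ring
lemma sR5 (r : ℂ) (u v : MA) : pc u (r • v) 5 = (r • pc u v) 5 := by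
  simp only [pc0, pc1, pc2, pc3, pc4, pc5, pc6, pc7, smulco]
  ring
lemma sR6 (r : ℂ) (u v : MA) : pc u (r • v) 6 = (r • pc u v) 6 := by
  simp only [pc0, pc1, pc2, pc3, pc4, pc5, pc6, pc7, smulco]
  ring
lemma sR7 (r : ℂ) (u v : MA) : pc u (r • v) 7 = (r • pc u v) 7 := by
  simp only [pc0, pc1, pc2, pc3, pc4, pc5, pc6, pc7, smulco]
  ring

lemma pc_sR (r : ℂ) (u v : MA) : pc u (r • v) = r • pc u v := by
  funext k; fin_cases k
  exacts [sR0 r u v, sR1 r u v, sR2 r u v, sR3 r u v, sR4 r u v, sR5 r u v, sR6 r u v, sR7 r u v]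

instance : Ring MA :=
  { (inferInstance : AddCommGroup MA) with
    mul := pc
    one := oneMA
    mul_assoc := pc_assoc
    one_mul := pc_oneL
    mul_one := pc_oneR
    left_distrib := pc_dL
    right_distrib := pc_dR
    zero_mul := pc_zL
    mul_zero := pc_zR }

instance : Algebra ℂ MA := Algebra.ofModule pc_sL pc_sR

lemma mulco (u v : MA) : u * v = pc u v := rfl

/-- the image of x -/
def xc : MA := fun k => if k = 1 then 1 else 0
/-- the image of y -/
def yc : MA := fun k => if k = 5 then 1 else 0

lemma xc0 : xc 0 = 0 := rfl
lemma xc1 : xc 1 = 1 := rfl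
lemma xc2 : xc 2 = 0 := rfl
lemma xc3 : xc 3 = 0 := rfl
lemma xc4 : xc 4 = 0 := rfl
lemma xc5 : xc 5 = 0 := rfl
lemma xc6 : xc 6 = 0 := rfl
lemma xc7 : xc 7 = 0 := rfl
lemma yc0 : yc 0 = 0 := rfl
lemma yc1 : yc 1 = 0 := rfl
lemma yc2 : yc 2 = 0 := rfl
lemma yc3 : yc 3 = 0 := rfl
lemma yc4 : yc 4 = 0 := rfl
lemma yc5 : yc 5 = 1 := rfl
lemma yc6 : yc 6 = 0 := rfl
lemma yc7 : yc 7 = 0 := rfl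

lemma acm0  : (pc xc yc + pc yc xc) 0 = (0 : MA) 0 := by
  simp only [pc0, pc1, pc2, pc3, pc4, pc5, pc6, pc7, addco, zeroco, xc0, xc1, xc2, xc3, xc4, xc5, xc6, xc7, yc0, yc1, yc2, yc3, yc4, yc5, yc6, yc7]
  ring
lemma acm1  : (pc xc yc + pc yc xc) 1 = (0 : MA) 1 := by
  simp only [pc0, pc1, pc2, pc3, pc4, pc5, pc6, pc7, addco, zeroco, xc0, xc1, xc2, xc3, xc4, xc5, xc6, xc7, yc0, yc1, yc2, yc3, yc4, yc5, yc6, yc7]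
  ring
lemma acm2  : (pc xc yc + pc yc xc) 2 = (0 : MA) 2 := by
  simp only [pc0, pc1, pc2, pc3, pc4, pc5, pc6, pc7, addco, zeroco, xc0, xc1, xc2, xc3, xc4, xc5, xc6, xc7, yc0, yc1, yc2, yc3, yc4, yc5, yc6, yc7]
  ring
lemma acm3  : (pc xc yc + pc yc xc) 3 = (0 : MA) 3 := by
  simp only [pc0, pc1, pc2, pc3, pc4, pc5, pc6, pc7, addco, zeroco, xc0, xc1, xc2, xc3, xc4, xc5, xc6, xc7, yc0, yc1, yc2, yc3, yc4, yc5, yc6, yc7]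
  ring
lemma acm4  : (pc xc yc + pc yc xc) 4 = (0 : MA) 4 := by
  simp only [pc0, pc1, pc2, pc3, pc4, pc5, pc6, pc7, addco, zeroco, xc0, xc1, xc2, xc3, xc4, xc5, xc6, xc7, yc0, yc1, yc2, yc3, yc4, yc5, yc6, yc7]
  ring
lemma acm5  : (pc xc yc + pc yc xc) 5 = (0 : MA) 5 := by
  simp only [pc0, pc1, pc2, pc3, pc4, pc5, pc6, pc7, addco, zeroco, xc0, xc1, xc2, xc3, xc4, xc5, xc6, xc7, yc0, yc1, yc2, yc3, yc4, yc5, yc6, yc7]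
  ring
lemma acm6  : (pc xc yc + pc yc xc) 6 = (0 : MA) 6 := by
  simp only [pc0, pc1, pc2, pc3, pc4, pc5, pc6, pc7, addco, zeroco, xc0, xc1, xc2, xc3, xc4, xc5, xc6, xc7, yc0, yc1, yc2, yc3, yc4, yc5, yc6, yc7]
  ring
lemma acm7  : (pc xc yc + pc yc xc) 7 = (0 : MA) 7 := by
  simp only [pc0, pc1, pc2, pc3, pc4, pc5, pc6, pc7, addco, zeroco, xc0, xc1, xc2, xc3, xc4, xc5, xc6, xc7, yc0, yc1, yc2, yc3, yc4, yc5, yc6, yc7]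
  ring

lemma anti : xc * yc + yc * xc = 0 := by
  show pc xc yc + pc yc xc = 0
  funext k; fin_cases k
  exacts [acm0, acm1, acm2, acm3, acm4, acm5, acm6, acm7]

lemma cbm0  : pc (pc xc xc) xc 0 = pc yc yc 0 := by
  simp only [pc0, pc1, pc2, pc3, pc4, pc5, pc6, pc7, xc0, xc1, xc2, xc3, xc4, xc5, xc6, xc7, yc0, yc1, yc2, yc3, yc4, yc5, yc6, yc7]
  ring
lemma cbm1  : pc (pc xc xc) xc 1 = pc yc yc 1 := by
  simp only [pc0, pc1, pc2, pc3, pc4, pc5, pc6, pc7, xc0, xc1, xc2, xc3, xc4, xc5, xc6, xc7, yc0, yc1, yc2, yc3, yc4, yc5, yc6, yc7]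
  ring
lemma cbm2  : pc (pc xc xc) xc 2 = pc yc yc 2 := by
  simp only [pc0, pc1, pc2, pc3, pc4, pc5, pc6, pc7, xc0, xc1, xc2, xc3, xc4, xc5, xc6, xc7, yc0, yc1, yc2, yc3, yc4, yc5, yc6, yc7]
  ring
lemma cbm3  : pc (pc xc xc) xc 3 = pc yc yc 3 := by
  simp only [pc0, pc1, pc2, pc3, pc4, pc5, pc6, pc7, xc0, xc1, xc2, xc3, xc4, xc5, xc6, xc7, yc0, yc1, yc2, yc3, yc4, yc5, yc6, yc7]
  ring
lemma cbm4  : pc (pc xc xc) xc 4 = pc yc yc 4 := by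
  simp only [pc0, pc1, pc2, pc3, pc4, pc5, pc6, pc7, xc0, xc1, xc2, xc3, xc4, xc5, xc6, xc7, yc0, yc1, yc2, yc3, yc4, yc5, yc6, yc7]
  ring
lemma cbm5  : pc (pc xc xc) xc 5 = pc yc yc 5 := by
  simp only [pc0, pc1, pc2, pc3, pc4, pc5, pc6, pc7, xc0, xc1, xc2, xc3, xc4, xc5, xc6, xc7, yc0, yc1, yc2, yc3, yc4, yc5, yc6, yc7]
  ring
lemma cbm6  : pc (pc xc xc) xc 6 = pc yc yc 6 := by
  simp only [pc0, pc1, pc2, pc3, pc4, pc5, pc6, pc7, xc0, xc1, xc2, xc3, xc4, xc5, xc6, xc7, yc0, yc1, yc2, yc3, yc4, yc5, yc6, yc7]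
  ring
lemma cbm7  : pc (pc xc xc) xc 7 = pc yc yc 7 := by
  simp only [pc0, pc1, pc2, pc3, pc4, pc5, pc6, pc7, xc0, xc1, xc2, xc3, xc4, xc5, xc6, xc7, yc0, yc1, yc2, yc3, yc4, yc5, yc6, yc7]
  ring

lemma cube : xc * xc * xc = yc * yc := by
  show pc (pc xc xc) xc = pc yc yc
  funext k; fin_cases k
  exacts [cbm0, cbm1, cbm2, cbm3, cbm4, cbm5, cbm6, cbm7]

lemma relL2 : xc ^ 3 - yc ^ 2 = 0 := by
  have h : xc ^ 3 = yc ^ 2 := by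
    calc xc ^ 3 = xc * xc * xc := by noncomm_ring
    _ = yc * yc := cube
    _ = yc ^ 2 := by noncomm_ring
  rw [h, sub_self]

/-- the algebra map from the free algebra sending the generators to `xc`, `yc` -/
def f : FreeAlgebra ℂ (Fin 2) →ₐ[ℂ] MA := FreeAlgebra.lift ℂ ![xc, yc]

lemma f_x : f (ι ℂ 0) = xc := by
  rw [f, FreeAlgebra.lift_ι_apply]; rfl

lemma f_y : f (ι ℂ 1) = yc := by
  rw [f, FreeAlgebra.lift_ι_apply]; rfl

lemma f_rel : ∀ ⦃u v⦄, LamRel u v → f u = f v := by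
  intro u v h
  cases h with
  | r1 =>
    rw [map_add, map_mul, map_mul, f_x, f_y, map_zero]
    exact anti
  | r2 =>
    rw [map_sub, map_pow, map_pow, f_x, f_y, map_zero]
    exact relL2

/-- the algebra map `Λ → MA` -/
def phi : RingQuot LamRel →ₐ[ℂ] MA := RingQuot.liftAlgHom ℂ ⟨f, f_rel⟩

lemma phi_x : phi (RingQuot.mkAlgHom ℂ LamRel (ι ℂ 0)) = xc := by
  rw [phi, RingQuot.liftAlgHom_mkAlgHom_apply, f_x]

lemma phi_y : phi (RingQuot.mkAlgHom ℂ LamRel (ι ℂ 1)) = yc := by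
  rw [phi, RingQuot.liftAlgHom_mkAlgHom_apply, f_y]

/-- the generators of Γ -/
noncomputable def aG : RingQuot GamRel := RingQuot.mkAlgHom ℂ GamRel (ι ℂ 0)
noncomputable def bG : RingQuot GamRel := RingQuot.mkAlgHom ℂ GamRel (ι ℂ 1)

lemma relG1 : aG * bG + bG * aG = 0 := by
  have h := RingQuot.mkAlgHom_rel ℂ GamRel.r1
  rw [map_add, map_mul, map_mul, map_zero] at h
  exact h

lemma relG2 : -aG ^ 2 + bG ^ 3 + aG * bG * aG = 0 := by
  have h := RingQuot.mkAlgHom_rel ℂ GamRel.r2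
  rw [map_add, map_add, map_neg, map_pow, map_pow, map_mul, map_mul, map_zero] at h
  exact h

/-- the "T-set" : the span of 1, B and the square of the maximal ideal -/
def inT (Bv : MA) (m : MA) : Prop := ∃ t : ℂ, m 1 = t * Bv 1 ∧ m 5 = t * Bv 5

lemma inT_mul {Bv u v : MA} (hu : inT Bv u) (hv : inT Bv v) : inT Bv (u * v) := by
  obtain ⟨t, h1, h5⟩ := hu
  obtain ⟨s, g1, g5⟩ := hv
  refine ⟨u 0 * s + t * v 0, ?_, ?_⟩
  · have e : (u * v) 1 = u 0 * v 1 + u 1 * v 0 := rfl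
    rw [e, h1, g1]; ring
  · have e : (u * v) 5 = u 0 * v 5 + u 5 * v 0 := rfl
    rw [e, h5, g5]; ring

lemma inT_add {Bv u v : MA} (hu : inT Bv u) (hv : inT Bv v) : inT Bv (u + v) := by
  obtain ⟨t, h1, h5⟩ := hu
  obtain ⟨s, g1, g5⟩ := hv
  refine ⟨t + s, ?_, ?_⟩
  · rw [addco, h1, g1]; ring
  · rw [addco, h5, g5]; ring

lemma inT_algebraMap (Bv : MA) (r : ℂ) : inT Bv (algebraMap ℂ MA r) := by
  refine ⟨0, ?_, ?_⟩
  · have e : (algebraMap ℂ MA r) 1 = r * oneMA 1 := rfl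
    rw [e, one1]; ring
  · have e : (algebraMap ℂ MA r) 5 = r * oneMA 5 := rfl
    rw [e, one5]; ring

end
end Stmt6Aux

open Stmt6Aux in
theorem stmt6 : IsEmpty (RingQuot LamRel ≃ₐ[ℂ] RingQuot GamRel) := by
  constructor
  intro e
  -- transport the Γ-relations into `MA` via `phi ∘ e.symm`
  let ψ : RingQuot GamRel →ₐ[ℂ] MA := phi.comp e.symm.toAlgHom
  set A : MA := ψ aG with hAdef
  set B : MA := ψ bG with hBdef
  have h1 : A * B + B * A = 0 := by
    have h := congrArg ψ relG1
    rw [map_add, map_mul, map_mul, map_zero] at h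
    exact h
  have h2 : -(A * A) + B * B * B + A * B * A = 0 := by
    have h := congrArg ψ relG2
    rw [map_add, map_add, map_neg, map_pow, map_pow, map_mul, map_mul, map_zero] at h
    calc -(A * A) + B * B * B + A * B * A = -A ^ 2 + B ^ 3 + A * B * A := by noncomm_ring
    _ = 0 := h
  -- extract coordinate equations
  have F10 := congrFun h1 (0 : Fin 8)
  have F13 := congrFun h1 (3 : Fin 8)
  have F17 := congrFun h1 (7 : Fin 8)
  have F20 := congrFun h2 (0 : Fin 8)
  have F22 := congrFun h2 (2 : Fin 8)
  have F23 := congrFun h2 (3 : Fin 8)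
  have F24 := congrFun h2 (4 : Fin 8)
  have F27 := congrFun h2 (7 : Fin 8)
  simp only [mulco, addco, negco, zeroco, pc0, pc1, pc2, pc3, pc4, pc5, pc6, pc7]
    at F10 F13 F17 F20 F22 F23 F24 F27
  -- the scalar consequences
  have E10 : A 0 * B 0 = 0 := by linear_combination F10 / 2
  have hA0B0 : A 0 = 0 ∧ B 0 = 0 := by
    rcases mul_eq_zero.mp E10 with hA0 | hB0
    · have hb : B 0 * (B 0 * B 0) = 0 := by
        linear_combination F20 + (A 0 - A 0 * B 0) * hA0
      rcases mul_eq_zero.mp hb with h | h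
      · exact ⟨hA0, h⟩
      · exact ⟨hA0, mul_self_eq_zero.mp h⟩
    · have ha : A 0 * A 0 = 0 := by
        linear_combination -F20 + (A 0 * A 0 + B 0 * B 0) * hB0
      exact ⟨mul_self_eq_zero.mp ha, hB0⟩
  obtain ⟨hA0, hB0⟩ := hA0B0
  have hA1 : A 1 = 0 := by
    have h : A 1 * A 1 = 0 := by
      linear_combination -F22 + (A 0 * B 2 + 2 * A 1 * B 1 - 2 * A 2 + 2 * A 2 * B 0) * hA0 +
        (A 1 * A 1 + 3 * B 0 * B 2 + 3 * B 1 * B 1) * hB0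
    exact mul_self_eq_zero.mp h
  have hA5 : A 5 = 0 := by
    by_contra h5
    have hb1 : B 1 ≠ 0 := by
      intro hb
      apply h5
      have h : A 5 * A 5 = 0 := by
        linear_combination -F23 +
          (A 0 * B 3 + 2 * A 1 * B 2 + 2 * A 2 * B 1 - 2 * A 3 + 2 * A 3 * B 0 + 2 * A 5 * B 5) * hA0 +
          (A 1 * B 1 - 2 * A 2 + 2 * A 2 * B 0) * hA1 +
          (A 5 * A 5 + 3 * B 0 * B 3 + 6 * B 1 * B 2 + 3 * B 5 * B 5) * hB0 + (B 1 * B 1) * hb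
      exact mul_self_eq_zero.mp h
    have hb5 : B 5 = 0 := by
      have key : A 5 * (A 5 * B 5) = 0 := by
        linear_combination (B 1 / 3) * F27 + (A 5 / 3) * F13 - (B 5 / 3) * F23 +
          (-(A 0 * B 1 * B 7) / 3 + (A 0 * B 3 * B 5) / 3 + (2 * A 1 * B 2 * B 5) / 3 +
            (2 * A 3 * B 0 * B 5) / 3 - (2 * A 3 * B 5) / 3 - (2 * A 5 * B 1 * B 2) / 3 -
            (2 * A 5 * B 3) / 3 + (2 * A 5 * B 5 * B 5) / 3 - (2 * A 7 * B 0 * B 1) / 3 +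
            (2 * A 7 * B 1) / 3) * hA0 +
          ((2 * A 1 * B 1 * B 5) / 3 + (2 * A 2 * B 0 * B 5) / 3 - (2 * A 2 * B 5) / 3 -
            (2 * A 5 * B 1 * B 1) / 3 - (2 * A 5 * B 2) / 3) * hA1 +
          (-(2 * A 2 * A 5 * B 1) / 3 - (2 * A 3 * A 5) / 3 + (A 5 * A 5 * B 5) / 3 -
            B 0 * B 1 * B 7 + B 0 * B 3 * B 5 + B 5 * B 5 * B 5) * hB0
      rcases mul_eq_zero.mp key with h | h
      · exact absurd h h5
      · rcases mul_eq_zero.mp h with h' | h'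
        · exact absurd h' h5
        · exact h'
    have ha2 : A 2 = 0 := by
      have h : A 2 * B 1 = 0 := by
        linear_combination F13 / 2 - B 3 * hA0 - B 2 * hA1 - A 3 * hB0 - A 5 * hb5
      rcases mul_eq_zero.mp h with h' | h'
      · exact h'
      · exact absurd h' hb1
    have hb2 : B 2 = 0 := by
      have h : A 5 * B 2 = 0 := by
        linear_combination F17 / 2 - B 7 * hA0 - A 7 * hB0 - B 5 * ha2
      rcases mul_eq_zero.mp h with h' | h'
      · exact absurd h' h5
      · exact h'
    have fin : A 5 * (A 5 * B 1) = 0 := by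
      linear_combination -F24 +
        (A 0 * B 4 + 2 * A 1 * B 3 + 2 * A 2 * B 2 + 2 * A 3 * B 1 - 2 * A 4 + 2 * A 4 * B 0) * hA0 +
        (A 1 * B 2 + 2 * A 2 * B 1 - 2 * A 3 + 2 * A 3 * B 0 + 2 * A 5 * B 5) * hA1 +
        (A 2 * A 2 + 3 * B 0 * B 4 + 6 * B 1 * B 3 + 3 * B 2 * B 2) * hB0 -
        A 2 * ha2 + (3 * B 1 * B 1) * hb2 + (B 1 * B 5) * hb5
    rcases mul_eq_zero.mp fin with h | h
    · exact h5 h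
    · rcases mul_eq_zero.mp h with h' | h'
      · exact h5 h'
      · exact hb1 h'
  -- every element of the image of ψ lies in T = ℂ·1 + ℂ·B + 𝔪²
  have hmem : ∀ z : RingQuot GamRel, inT B (ψ z) := by
    intro z
    obtain ⟨w, rfl⟩ := RingQuot.mkAlgHom_surjective ℂ GamRel z
    induction w using FreeAlgebra.induction with
    | grade0 r =>
      rw [AlgHom.commutes, AlgHom.commutes]
      exact inT_algebraMap B r
    | grade1 i =>
      fin_cases i
      · exact (⟨0, by rw [hA1]; ring, by rw [hA5]; ring⟩ : inT B A)
      · exact (⟨1, (one_mul _).symm, (one_mul _).symm⟩ : inT B B)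
    | mul x y hx hy =>
      rw [map_mul, map_mul]
      exact inT_mul hx hy
    | add x y hx hy =>
      rw [map_add, map_add]
      exact inT_add hx hy
  -- but xc and yc are in the image of ψ, which is impossible
  have hpsiphi : ∀ z : RingQuot LamRel, ψ (e z) = phi z := by
    intro z
    show phi (e.symm.toAlgHom (e z)) = phi z
    rw [AlgEquiv.toAlgHom_eq_coe, AlgEquiv.coe_algHom, AlgEquiv.symm_apply_apply]
  have hx : inT B xc := by
    have h := hmem (e (RingQuot.mkAlgHom ℂ LamRel (ι ℂ 0)))
    rwa [hpsiphi, phi_x] at h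
  have hy : inT B yc := by
    have h := hmem (e (RingQuot.mkAlgHom ℂ LamRel (ι ℂ 1)))
    rwa [hpsiphi, phi_y] at h
  obtain ⟨t, ht1, ht5⟩ := hx
  obtain ⟨s, hs1, hs5⟩ := hy
  rw [xc1] at ht1
  rw [xc5] at ht5
  rw [yc5] at hs5
  have hB5 : B 5 = 0 := by
    have ht : t ≠ 0 := by
      intro h
      rw [h, zero_mul] at ht1
      exact one_ne_zero ht1
    rcases mul_eq_zero.mp ht5.symm with h | h
    · exact absurd h ht
    · exact h
  rw [hB5, mul_zero] at hs5
  exact one_ne_zero hs5
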